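/- Let ξ₁, ξ₂, ξ₃ be real numbers with ξ₁ + ξ₂ + ξ₃ = 0. If N_max := max(|ξ₁|,|ξ₂|,|ξ₃|), N_min := min(|ξ₁|,|ξ₂|,|ξ₃|), and N_med is the middle value, and N_max ≥ 1 with N_max ≤ 2·N_med, then |ξ₁⁵ + ξ₂⁵ + ξ₃⁵| is comparable to N_max⁴·N_min, i.e., there exist absolute constants c, C > 0 such that c·N_max⁴·N_min ≤ |ξ₁⁵ + ξ₂⁵ + ξ₃⁵| ≤ C·N_max⁴·N_min. -/

import Mathlib

private lemma prod_max_med_min (a b c : ℝ) :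
    max a (max b c) * ((a + b + c) - max a (max b c) - min a (min b c)) *
      min a (min b c) = a * b * c := by
  simp only [max_def, min_def]
  split_ifs <;> first | ring1 | (exfalso; linarith)

private lemma med_le_max (a b c : ℝ) :
    (a + b + c) - max a (max b c) - min a (min b c) ≤ max a (max b c) := by
  simp only [max_def, min_def]
  split_ifs <;> linarith

private lemma max_eq_one_of3 (a b c : ℝ) :
    max a (max b c) = a ∨ max a (max b c) = b ∨ max a (max b c) = c := by
  simp only [max_def]
  split_ifs <;> simp

theorem resonance_relation :
    ∃ c C : ℝ, 0 < c ∧ 0 < C ∧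
      ∀ ξ₁ ξ₂ ξ₃ : ℝ, ξ₁ + ξ₂ + ξ₃ = 0 →
        ∀ Nmax Nmin Nmed : ℝ,
          Nmax = max |ξ₁| (max |ξ₂| |ξ₃|) →
          Nmin = min |ξ₁| (min |ξ₂| |ξ₃|) →
          Nmed = |ξ₁| + |ξ₂| + |ξ₃| - Nmax - Nmin →
          1 ≤ Nmax → Nmax ≤ 2 * Nmed →
          c * Nmax ^ 4 * Nmin ≤ |ξ₁ ^ 5 + ξ₂ ^ 5 + ξ₃ ^ 5| ∧
            |ξ₁ ^ 5 + ξ₂ ^ 5 + ξ₃ ^ 5| ≤ C * Nmax ^ 4 * Nmin := by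
  refine ⟨5/4, 15/2, by norm_num, by norm_num, ?_⟩
  intro ξ₁ ξ₂ ξ₃ hsum Nmax Nmin Nmed hmax hmin hmed h1 h2
  have hξ3 : ξ₃ = -ξ₁ - ξ₂ := by linarith
  have hS : ξ₁ ^ 5 + ξ₂ ^ 5 + ξ₃ ^ 5
      = 5/2 * (ξ₁ * ξ₂ * ξ₃) * (ξ₁ ^ 2 + ξ₂ ^ 2 + ξ₃ ^ 2) := by
    rw [hξ3]; ring
  have hQ0 : (0:ℝ) ≤ ξ₁ ^ 2 + ξ₂ ^ 2 + ξ₃ ^ 2 := by positivity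
  have habs : |ξ₁ ^ 5 + ξ₂ ^ 5 + ξ₃ ^ 5|
      = 5/2 * (|ξ₁| * |ξ₂| * |ξ₃|) * (ξ₁ ^ 2 + ξ₂ ^ 2 + ξ₃ ^ 2) := by
    rw [hS, abs_mul, abs_mul, abs_mul, abs_mul, abs_of_nonneg hQ0]
    norm_num
  have hprod : Nmax * Nmed * Nmin = |ξ₁| * |ξ₂| * |ξ₃| := by
    rw [hmed, hmax, hmin]; exact prod_max_med_min _ _ _
  have hmin0 : 0 ≤ Nmin := by
    rw [hmin]; exact le_min (abs_nonneg _) (le_min (abs_nonneg _) (abs_nonneg _))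
  have hmaxpos : (0:ℝ) < Nmax := lt_of_lt_of_le one_pos h1
  have hmed0 : 0 ≤ Nmed := by linarith
  have hmed2 : Nmax / 2 ≤ Nmed := by linarith
  have hmedmax : Nmed ≤ Nmax := by rw [hmed, hmax, hmin]; exact med_le_max _ _ _
  have hQle : ξ₁ ^ 2 + ξ₂ ^ 2 + ξ₃ ^ 2 ≤ 3 * Nmax ^ 2 := by
    have ha1 : |ξ₁| ≤ Nmax := by rw [hmax]; exact le_max_left _ _
    have ha2 : |ξ₂| ≤ Nmax := by
      rw [hmax]; exact le_trans (le_max_left _ _) (le_max_right _ _)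
    have ha3 : |ξ₃| ≤ Nmax := by
      rw [hmax]; exact le_trans (le_max_right _ _) (le_max_right _ _)
    have e1 := sq_abs ξ₁
    have e2 := sq_abs ξ₂
    have e3 := sq_abs ξ₃
    nlinarith [abs_nonneg ξ₁, abs_nonneg ξ₂, abs_nonneg ξ₃]
  have hQge : Nmax ^ 2 ≤ ξ₁ ^ 2 + ξ₂ ^ 2 + ξ₃ ^ 2 := by
    have h := max_eq_one_of3 |ξ₁| |ξ₂| |ξ₃|
    rw [← hmax] at h
    rcases h with h | h | h <;> rw [h, sq_abs]
    · linarith [sq_nonneg ξ₂, sq_nonneg ξ₃]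
    · linarith [sq_nonneg ξ₁, sq_nonneg ξ₃]
    · linarith [sq_nonneg ξ₁, sq_nonneg ξ₂]
  rw [habs, ← hprod]
  have hP0 : 0 ≤ Nmax * Nmed * Nmin :=
    mul_nonneg (mul_nonneg hmaxpos.le hmed0) hmin0
  constructor
  · calc 5/4 * Nmax ^ 4 * Nmin
        = 5/2 * (Nmax * (Nmax / 2) * Nmin) * Nmax ^ 2 := by ring
      _ ≤ 5/2 * (Nmax * Nmed * Nmin) * Nmax ^ 2 := by
          gcongr
      _ ≤ 5/2 * (Nmax * Nmed * Nmin) * (ξ₁ ^ 2 + ξ₂ ^ 2 + ξ₃ ^ 2) := by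
          gcongr
  · calc 5/2 * (Nmax * Nmed * Nmin) * (ξ₁ ^ 2 + ξ₂ ^ 2 + ξ₃ ^ 2)
        ≤ 5/2 * (Nmax * Nmax * Nmin) * (3 * Nmax ^ 2) := by
          gcongr
      _ = 15/2 * Nmax ^ 4 * Nmin := by ring
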